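/- arXiv:1209.5130 — 6 statements merged into one kernel-verified Lean document; each statement's English description precedes it below -/
import Mathlib

section
/- The spatial channel selection game is a weighted potential game: if a single user k changes its channel from a_k to a_k', keeping all other channels and all locations fixed, then Φ(d, a') − Φ(d, a) = −log(1−p_k)·(U_k(d, a') − U_k(d, a)), where Φ(d,a) = Σ_{i=1}^N −log(1−p_i)·( (1/2)·Σ_{j ∈ N_i^{a_i}(d,a)} log(1−p_j) + log(θ_{a_i} B_{a_i,d_i}^i p_i) ). -/
open Finset

/-- The spatial channel selection game is a weighted potential game. -/
theorem spatial_channel_selection_weighted_potential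
    {N M Δ : Type*} [Fintype N] [DecidableEq N] [DecidableEq M]
    (p : N → ℝ) (hp : ∀ n, p n ∈ Set.Ioo (0 : ℝ) 1)
    (θ : M → ℝ) (hθ : ∀ m, θ m ∈ Set.Ioo (0 : ℝ) 1)
    (B : N → M → Δ → ℝ) (hB : ∀ n m d, 0 < B n m d)
    (Nb : (N → Δ) → N → Finset N)
    (hsym : ∀ d i j, i ∈ Nb d j ↔ j ∈ Nb d i)
    (hirr : ∀ d i, i ∉ Nb d i)
    (U : N → (N → Δ) → (N → M) → ℝ)
    (hU : ∀ n d a, U n d a =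
      Real.log (θ (a n) * B n (a n) (d n) * p n) +
        ∑ i ∈ (Nb d n).filter (fun i => a i = a n), Real.log (1 - p i))
    (Φ : (N → Δ) → (N → M) → ℝ)
    (hΦ : ∀ d a, Φ d a = ∑ i, (-Real.log (1 - p i)) *
      ((1 / 2) * ∑ j ∈ (Nb d i).filter (fun j => a j = a i), Real.log (1 - p j) +
        Real.log (θ (a i) * B i (a i) (d i) * p i)))
    (d : N → Δ) (a : N → M) (k : N) (ak' : M) :
    Φ d (Function.update a k ak') - Φ d a =
      (-Real.log (1 - p k)) * (U k d (Function.update a k ak') - U k d a) := by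
  classical
  set a' : N → M := Function.update a k ak' with ha'def
  set L : N → ℝ := fun i => Real.log (1 - p i) with hLdef
  have ha'k : a' k = ak' := Function.update_self _ _ _
  have ha'ne : ∀ j, j ≠ k → a' j = a j := fun j hj => Function.update_of_ne hj _ _
  have hmemne : ∀ i, i ∈ Nb d k → i ≠ k := by
    intro i hi h; exact hirr d k (h ▸ hi)
  set Ck' : ℝ := Real.log (θ ak' * B k ak' (d k) * p k) with hCk'def
  set Ck : ℝ := Real.log (θ (a k) * B k (a k) (d k) * p k) with hCkdef
  set T' : ℝ := ∑ j ∈ (Nb d k).filter (fun j => a j = ak'), L j with hT'def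
  set T : ℝ := ∑ j ∈ (Nb d k).filter (fun j => a j = a k), L j with hTdef
  set F : (N → M) → N → ℝ := fun b i => (-L i) *
      ((1 / 2) * ∑ j ∈ (Nb d i).filter (fun j => b j = b i), L j +
        Real.log (θ (b i) * B i (b i) (d i) * p i)) with hFdef
  -- filter for user k under a'
  have hfk' : (Nb d k).filter (fun j => a' j = a' k) =
      (Nb d k).filter (fun j => a j = ak') := by
    apply Finset.filter_congr
    intro j hj
    rw [ha'ne j (hmemne j hj), ha'k]
  -- U difference
  have hUdiff : U k d a' - U k d a = (Ck' + T') - (Ck + T) := by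
    rw [hU, hU, hfk', ha'k]
  -- Φ as sum of F
  have hΦF : ∀ b : N → M, Φ d b = ∑ i, F b i := fun b => hΦ d b
  rw [hΦF, hΦF, ← Finset.sum_sub_distrib]
  -- restrict sum to insert k (Nb d k)
  have hzero : ∀ i ∈ (Finset.univ : Finset N), i ∉ insert k (Nb d k) →
      F a' i - F a i = 0 := by
    intro i _ hi
    have hik : i ≠ k := fun h => hi (by simp [h])
    have hiNb : i ∉ Nb d k := fun h => hi (Finset.mem_insert_of_mem h)
    have hfe : (Nb d i).filter (fun j => a' j = a' i) =
        (Nb d i).filter (fun j => a j = a i) := by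
      apply Finset.filter_congr
      intro j hj
      have hjk : j ≠ k := fun h => hiNb ((hsym d i k).mpr (h ▸ hj))
      rw [ha'ne j hjk, ha'ne i hik]
    simp only [F]
    rw [hfe, ha'ne i hik, sub_self]
  rw [← Finset.sum_subset (Finset.subset_univ (insert k (Nb d k))) hzero]
  rw [Finset.sum_insert (hirr d k)]
  -- term at k
  have htermk : F a' k - F a k = (-L k) * ((1 / 2) * T' + Ck') -
      (-L k) * ((1 / 2) * T + Ck) := by
    simp only [F]
    rw [hfk', ha'k]
  rw [htermk]
  -- terms for i ∈ Nb d k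
  have hcross : ∀ i ∈ Nb d k, F a' i - F a i =
      -((1 / 2) * L k * (if a i = ak' then L i else 0)) +
        (1 / 2) * L k * (if a i = a k then L i else 0) := by
    intro i hi
    have hik : i ≠ k := hmemne i hi
    have hkNb : k ∈ Nb d i := (hsym d k i).mpr hi
    have hfi : ∀ b : N → M, ∑ j ∈ (Nb d i).filter (fun j => b j = b i), L j =
        ∑ j ∈ Nb d i, if b j = b i then L j else 0 := by
      intro b; rw [Finset.sum_filter]
    have key : (∑ j ∈ Nb d i, if a' j = a' i then L j else 0) -
        (∑ j ∈ Nb d i, if a j = a i then L j else 0) =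
        (if ak' = a i then L k else 0) - (if a k = a i then L k else 0) := by
      rw [← Finset.sum_sub_distrib]
      rw [Finset.sum_eq_single_of_mem k hkNb]
      · rw [ha'k, ha'ne i hik]
      · intro j hj hjk
        rw [ha'ne j hjk, ha'ne i hik, sub_self]
    have hCeq : Real.log (θ (a' i) * B i (a' i) (d i) * p i) =
        Real.log (θ (a i) * B i (a i) (d i) * p i) := by rw [ha'ne i hik]
    have hthis : F a' i - F a i = (-L i) * ((1 / 2) *
        ((if ak' = a i then L k else 0) - (if a k = a i then L k else 0))) := by
      simp only [F]
      rw [hfi a', hfi a, hCeq, ← key]; ring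
    have e1 : (if ak' = a i then L k else 0) = (if a i = ak' then L k else 0) := by
      by_cases h : a i = ak'
      · rw [if_pos h.symm, if_pos h]
      · rw [if_neg (fun hh => h hh.symm), if_neg h]
    have e2 : (if a k = a i then L k else 0) = (if a i = a k then L k else 0) := by
      by_cases h : a i = a k
      · rw [if_pos h.symm, if_pos h]
      · rw [if_neg (fun hh => h hh.symm), if_neg h]
    rw [hthis, e1, e2]
    split_ifs <;> ring
  rw [Finset.sum_congr rfl hcross]
  rw [Finset.sum_add_distrib, Finset.sum_neg_distrib, ← Finset.mul_sum, ← Finset.mul_sum]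
  have h1 : (∑ i ∈ Nb d k, if a i = ak' then L i else 0) = T' := by
    rw [hT'def]; exact (Finset.sum_filter _ _).symm
  have h2 : (∑ i ∈ Nb d k, if a i = a k then L i else 0) = T := by
    rw [hTdef]; exact (Finset.sum_filter _ _).symm
  rw [h1, h2, hUdiff]
  ring
end

section
/- Every weighted potential game with finitely many players and finite strategy sets has the finite improvement property: any sequence of asynchronous strict better-response updates (at each step exactly one player switches to a strategy strictly improving its own utility) is finite and terminates at a pure Nash equilibrium. -/
/-- Every finite weighted potential game has the finite improvement
property: there is no infinite sequence of asynchronous strict better-response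
updates, and any profile at which no player has a strict better response
(i.e., where every improvement path terminates) is a pure Nash equilibrium. -/
theorem finite_weighted_potential_game_FIP
    {N : Type*} [Fintype N] [DecidableEq N]
    (S : N → Type*) [∀ n, Fintype (S n)] [∀ n, Nonempty (S n)]
    (U : N → (∀ n, S n) → ℝ)
    (Φ : (∀ n, S n) → ℝ) (w : N → ℝ) (hw : ∀ n, 0 < w n)
    (hpot : ∀ (n : N) (s : ∀ n, S n) (s' : S n),
      Φ (Function.update s n s') - Φ s = w n * (U n (Function.update s n s') - U n s)) :
    (¬ ∃ seq : ℕ → (∀ n, S n), ∀ t : ℕ, ∃ (k : N) (x : S k),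
        seq (t + 1) = Function.update (seq t) k x ∧ U k (seq (t + 1)) > U k (seq t)) ∧
    (∀ s : ∀ n, S n,
      (¬ ∃ (k : N) (x : S k), U k (Function.update s k x) > U k s) →
      ∀ (n : N) (x : S n), U n (Function.update s n x) ≤ U n s) := by
  constructor
  · rintro ⟨seq, hseq⟩
    have hmono : StrictMono (fun t => Φ (seq t)) := by
      apply strictMono_nat_of_lt_succ
      intro t
      obtain ⟨k, x, heq, hgt⟩ := hseq t
      have h := hpot k (seq t) x
      rw [← heq] at h
      have : 0 < Φ (seq (t + 1)) - Φ (seq t) := by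
        rw [h]
        exact mul_pos (hw k) (by linarith)
      linarith
    have hinj : Function.Injective (fun t => Φ (seq t)) := hmono.injective
    have hsub : Set.range (fun t => Φ (seq t)) ⊆ Set.range Φ := by
      rintro y ⟨t, rfl⟩; exact ⟨seq t, rfl⟩
    exact ((Set.finite_range Φ).subset hsub).not_infinite
      (Set.infinite_range_of_injective hinj)
  · intro s h n x
    by_contra hlt
    exact h ⟨n, x, lt_of_not_ge hlt⟩
end

section
/- Every finite weighted potential game possesses at least one pure Nash equilibrium. -/
/-- Every finite weighted potential game has a pure Nash equilibrium. -/
theorem finite_weighted_potential_game_has_nash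
    {N : Type*} [Fintype N] [DecidableEq N]
    (S : N → Type*) [∀ n, Fintype (S n)] [∀ n, Nonempty (S n)]
    (U : N → (∀ n, S n) → ℝ)
    (Φ : (∀ n, S n) → ℝ) (w : N → ℝ) (hw : ∀ n, 0 < w n)
    (hpot : ∀ (n : N) (s : ∀ n, S n) (s' : S n),
      Φ (Function.update s n s') - Φ s = w n * (U n (Function.update s n s') - U n s)) :
    ∃ s : ∀ n, S n, ∀ (n : N) (x : S n), U n (Function.update s n x) ≤ U n s := by
  obtain ⟨s, hs⟩ := Finite.exists_max Φ
  refine ⟨s, fun n x => ?_⟩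
  have h := hpot n s x
  have h2 : Φ (Function.update s n x) - Φ s ≤ 0 := by linarith [hs (Function.update s n x)]
  nlinarith [hw n]
end

section
/- The strategic mobility game with fixed channel selections is a weighted potential game: if a single user k changes its location from d_k to d_k' (all other locations and all channel selections fixed), then Φ(d', a) − Φ(d, a) = −log(1−p_k)·(U_k(d', a) − U_k(d, a)), with Φ as in the spatial channel selection game. -/
open Finset

/-- The strategic mobility game with fixed channel selections is a
weighted potential game. Neighbors are determined by distance: `N_n(d) =
{ i ≠ n : dist (d i) (d n) ≤ δ }`. -/
theorem strategic_mobility_weighted_potential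
    {N M Δ : Type*} [Fintype N] [DecidableEq N] [DecidableEq M]
    [PseudoMetricSpace Δ] [Fintype Δ] (δ : ℝ)
    (p : N → ℝ) (hp : ∀ n, p n ∈ Set.Ioo (0 : ℝ) 1)
    (θ : M → ℝ) (hθ : ∀ m, θ m ∈ Set.Ioo (0 : ℝ) 1)
    (B : N → M → Δ → ℝ) (hB : ∀ n m d, 0 < B n m d)
    (Nb : (N → Δ) → N → Finset N)
    (hNb : ∀ d n, Nb d n = univ.filter (fun i => i ≠ n ∧ dist (d i) (d n) ≤ δ))
    (U : N → (N → Δ) → (N → M) → ℝ)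
    (hU : ∀ n d a, U n d a =
      Real.log (θ (a n) * B n (a n) (d n) * p n) +
        ∑ i ∈ (Nb d n).filter (fun i => a i = a n), Real.log (1 - p i))
    (Φ : (N → Δ) → (N → M) → ℝ)
    (hΦ : ∀ d a, Φ d a = ∑ i, (-Real.log (1 - p i)) *
      ((1 / 2) * ∑ j ∈ (Nb d i).filter (fun j => a j = a i), Real.log (1 - p j) +
        Real.log (θ (a i) * B i (a i) (d i) * p i)))
    (d : N → Δ) (a : N → M) (k : N) (dk' : Δ) :
    Φ (Function.update d k dk') a - Φ d a =
      (-Real.log (1 - p k)) * (U k (Function.update d k dk') a - U k d a) := by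

  classical
  set d' := Function.update d k dk' with hd'
  set L : N → ℝ := fun j => Real.log (1 - p j) with hL
  set c : (N → Δ) → N → ℝ := fun e i => Real.log (θ (a i) * B i (a i) (e i) * p i) with hc
  set S : (N → Δ) → N → N → ℝ :=
    fun e i j => if (j ≠ i ∧ dist (e j) (e i) ≤ δ ∧ a j = a i) then L j else 0 with hS
  have hfilter : ∀ (e : N → Δ) i,
      ∑ j ∈ (Nb e i).filter (fun j => a j = a i), Real.log (1 - p j) = ∑ j, S e i j := by
    intro e i
    rw [hNb]
    have hset : (univ.filter (fun j => j ≠ i ∧ dist (e j) (e i) ≤ δ)).filter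
        (fun j => a j = a i)
        = univ.filter (fun j => j ≠ i ∧ dist (e j) (e i) ≤ δ ∧ a j = a i) := by
      ext j; simp [and_assoc]
    rw [hset, Finset.sum_filter]
  have ΦA : ∀ e, Φ e a = ∑ i, (-L i) * ((1 / 2) * ∑ j, S e i j + c e i) := by
    intro e
    rw [hΦ]
    exact Finset.sum_congr rfl fun i _ => by rw [hfilter]
  have UA : ∀ e, U k e a = c e k + ∑ j, S e k j := by
    intro e
    rw [hU, hfilter]
  have Sym : ∀ (e : N → Δ) i, (-L i) * S e i k = (-L k) * S e k i := by
    intro e i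
    simp only [hS]
    by_cases h : k ≠ i ∧ dist (e k) (e i) ≤ δ ∧ a k = a i
    · rw [if_pos h, if_pos ⟨h.1.symm, by rw [dist_comm]; exact h.2.1, h.2.2.symm⟩]
      ring
    · rw [if_neg h, if_neg (fun hcon => h ⟨hcon.1.symm, by rw [dist_comm]; exact hcon.2.1,
        hcon.2.2.symm⟩)]
      simp
  have Szero : ∀ e : N → Δ, S e k k = 0 := by
    intro e; simp [hS]
  have Supdate : ∀ i j : N, i ≠ k → j ≠ k → S d' i j = S d i j := by
    intro i j hi hj
    simp only [hS, hd', Function.update_of_ne hi, Function.update_of_ne hj]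
  have cupdate : ∀ i : N, i ≠ k → c d' i = c d i := by
    intro i hi
    simp only [hc, hd', Function.update_of_ne hi]
  have hinner : ∀ i : N, i ≠ k → (∑ j, S d' i j) - (∑ j, S d i j) = S d' i k - S d i k := by
    intro i hi
    rw [← Finset.sum_sub_distrib]
    apply Finset.sum_eq_single
    · intro j _ hj
      rw [Supdate i j hi hj, sub_self]
    · intro h; exact absurd (Finset.mem_univ k) h
  rw [ΦA d', ΦA d, UA d', UA d, ← Finset.sum_sub_distrib,
    ← Finset.sum_erase_add univ _ (Finset.mem_univ k)]
  have h1 : ∀ i ∈ univ.erase k,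
      (-L i) * ((1 / 2) * ∑ j, S d' i j + c d' i) -
        (-L i) * ((1 / 2) * ∑ j, S d i j + c d i)
      = (1 / 2) * ((-L k) * S d' k i - (-L k) * S d k i) := by
    intro i hi
    have hik : i ≠ k := Finset.ne_of_mem_erase hi
    rw [cupdate i hik, ← Sym d' i, ← Sym d i]
    linear_combination (-(L i)) / 2 * hinner i hik
  rw [Finset.sum_congr rfl h1]
  have h2 : ∑ i ∈ univ.erase k, (1 / 2) * ((-L k) * S d' k i - (-L k) * S d k i)
      = ∑ i, (1 / 2) * ((-L k) * S d' k i - (-L k) * S d k i) := by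
    rw [← Finset.sum_erase_add univ _ (Finset.mem_univ k), Szero, Szero]
    simp
  rw [h2]
  have h3 : ∑ i, (1 / 2) * ((-L k) * S d' k i - (-L k) * S d k i)
      = (1 / 2) * (-L k) * ((∑ i, S d' k i) - (∑ i, S d k i)) := by
    rw [← Finset.sum_sub_distrib, Finset.mul_sum]
    apply Finset.sum_congr rfl
    intros; ring
  rw [h3]
  ring
end

section
/- The Gibbs distribution Pr(d) = e^{γΦ(d,a)}/Σ_{d̃ ∈ Θ} e^{γΦ(d̃,a)} satisfies the detailed balance equations Pr(d)·q_{d,d'} = Pr(d')·q_{d',d} for the distributed strategic mobility Markov chain, where for profiles d, d' differing only in the location of user n the transition rate is q_{d,d'} = τ_n · e^{w_n γ U_n(d',a)} / ( e^{w_n γ U_n(d,a)} + e^{w_n γ U_n(d',a)} ) with w_n = −log(1−p_n), and q_{d,d'} = 0 if d, d' differ in more than one coordinate. -/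
open Finset

/-- The Gibbs distribution over location profiles satisfies the
detailed balance equations for the distributed strategic mobility Markov chain. -/
theorem strategic_mobility_detailed_balance
    {N Δ : Type*} [Fintype N] [DecidableEq N] [Fintype Δ] [DecidableEq Δ]
    (γ : ℝ) (hγ : 0 < γ)
    (τ : N → ℝ) (hτ : ∀ n, 0 < τ n)
    (w : N → ℝ) (hw : ∀ n, 0 < w n)
    (U : N → (N → Δ) → ℝ)
    (Φ : (N → Δ) → ℝ)
    (hpot : ∀ (d : N → Δ) (n : N) (l : Δ),
      Φ (Function.update d n l) - Φ d = w n * (U n (Function.update d n l) - U n d))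
    (Pr : (N → Δ) → ℝ)
    (hPr : ∀ d, Pr d = Real.exp (γ * Φ d) / ∑ d' : N → Δ, Real.exp (γ * Φ d'))
    (q : (N → Δ) → (N → Δ) → ℝ)
    (hq : ∀ (d : N → Δ) (n : N) (l : Δ), l ≠ d n →
      q d (Function.update d n l) =
        τ n * Real.exp (w n * γ * U n (Function.update d n l)) /
          (Real.exp (w n * γ * U n d) + Real.exp (w n * γ * U n (Function.update d n l))))
    (hq0 : ∀ d d' : N → Δ, d ≠ d' →
      (¬ ∃ (n : N) (l : Δ), d' = Function.update d n l) → q d d' = 0) :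
    ∀ d d' : N → Δ, d ≠ d' → Pr d * q d d' = Pr d' * q d' d := by
  intro d d' hne
  by_cases hex : ∃ (n : N) (l : Δ), d' = Function.update d n l
  · obtain ⟨n, l, h⟩ := hex
    have hl : l ≠ d n := by
      intro he
      apply hne
      rw [h, he, Function.update_eq_self]
    have hdn : d' n = l := by rw [h]; simp
    have hd : d = Function.update d' n (d n) := by
      funext m
      by_cases hm : m = n
      · subst hm; simp
      · simp [h, Function.update, hm]
    have hln : d n ≠ d' n := by rw [hdn]; exact fun he => hl he.symm
    have q1 := hq d n l hl
    rw [← h] at q1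
    have q2 := hq d' n (d n) hln
    rw [← hd] at q2
    have hS : 0 < ∑ e : N → Δ, Real.exp (γ * Φ e) :=
      Finset.sum_pos (fun _ _ => Real.exp_pos _) ⟨d, Finset.mem_univ d⟩
    have key : Real.exp (γ * Φ d) * Real.exp (w n * γ * U n d') =
        Real.exp (γ * Φ d') * Real.exp (w n * γ * U n d) := by
      rw [← Real.exp_add, ← Real.exp_add]
      congr 1
      have hp := hpot d n l
      rw [← h] at hp
      linear_combination -γ * hp
    have h1 : 0 < Real.exp (w n * γ * U n d) + Real.exp (w n * γ * U n d') :=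
      by positivity
    have h2 : 0 < Real.exp (w n * γ * U n d') + Real.exp (w n * γ * U n d) :=
      by positivity
    rw [hPr, hPr, q1, q2]
    rw [add_comm (Real.exp (w n * γ * U n d')) (Real.exp (w n * γ * U n d))]
    rw [div_mul_div_comm, div_mul_div_comm]; congr 1
    linear_combination τ n * key
  · have hex' : ¬ ∃ (n : N) (l : Δ), d = Function.update d' n l := by
      rintro ⟨n, l, h⟩
      exact hex ⟨n, d' n, by
        funext m
        by_cases hm : m = n
        · subst hm; simp
        · simp [h, Function.update, hm]⟩
    rw [hq0 d d' hne hex, hq0 d' d (Ne.symm hne) hex']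
    ring
end

section
/- Suppose for every user n there exist functions L_i^n and V_i^n on mixed-strategy profiles and a weight w_n > 0 with L_i^n(σ) − L_j^n(σ) = w_n·(V_i^n(σ) − V_j^n(σ)) for all channels i,j, and L(σ) = Σ_i σ_i^n L_i^n(σ) for each n (as a function of user n's strategy with others fixed). Then along the replicator dynamics dσ_m^n/dT = σ_m^n(V_m^n(σ) − Σ_i σ_i^n V_i^n(σ)), the directional derivative of L in user n's coordinates equals (w_n/2)·Σ_{i,j} σ_i^n σ_j^n (V_i^n(σ) − V_j^n(σ))², which is nonnegative. -/
open Finset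

/-- Along the replicator dynamics, the directional derivative of
the expected potential L in user n's coordinates equals
(w_n/2)·Σ_{i,j} σ_i σ_j (V_i − V_j)², which is nonnegative.
Here, for a fixed mixed-strategy profile σ, the values L_j^n(σ) and V_j^n(σ) are
treated as fixed real numbers L j and V j for user n, with σn user n's mixed
strategy. -/
theorem replicator_potential_derivative_nonneg
    {M : Type*} [Fintype M]
    (σn : M → ℝ) (hσn : ∀ m, 0 ≤ σn m) (hsum : ∑ m : M, σn m = 1)
    (L V : M → ℝ) (w : ℝ) (hw : 0 < w)
    (hLV : ∀ i j : M, L i - L j = w * (V i - V j)) :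
    (∑ j : M, L j * (σn j * ∑ i : M, σn i * (V j - V i)) =
      (1 / 2) * ∑ j : M, ∑ i : M, σn j * σn i * (V j - V i) * (L j - L i)) ∧
    (∑ j : M, L j * (σn j * ∑ i : M, σn i * (V j - V i)) =
      (w / 2) * ∑ j : M, ∑ i : M, σn j * σn i * (V j - V i) ^ 2) ∧
    0 ≤ ∑ j : M, L j * (σn j * ∑ i : M, σn i * (V j - V i)) := by
  have hA : ∑ j : M, L j * (σn j * ∑ i : M, σn i * (V j - V i)) =
      ∑ j : M, ∑ i : M, σn j * σn i * (V j - V i) * L j := by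
    refine Finset.sum_congr rfl fun j _ => ?_
    rw [Finset.mul_sum, Finset.mul_sum]
    refine Finset.sum_congr rfl fun i _ => by ring
  have hB : ∑ j : M, ∑ i : M, σn j * σn i * (V j - V i) * L i =
      -∑ j : M, ∑ i : M, σn j * σn i * (V j - V i) * L j := by
    rw [Finset.sum_comm, ← Finset.sum_neg_distrib]
    refine Finset.sum_congr rfl fun i _ => ?_
    rw [← Finset.sum_neg_distrib]
    refine Finset.sum_congr rfl fun j _ => by ring
  have hC : ∑ j : M, ∑ i : M, σn j * σn i * (V j - V i) * (L j - L i) =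
      (∑ j : M, ∑ i : M, σn j * σn i * (V j - V i) * L j) -
      ∑ j : M, ∑ i : M, σn j * σn i * (V j - V i) * L i := by
    rw [← Finset.sum_sub_distrib]
    refine Finset.sum_congr rfl fun j _ => ?_
    rw [← Finset.sum_sub_distrib]
    refine Finset.sum_congr rfl fun i _ => by ring
  have h1 : ∑ j : M, L j * (σn j * ∑ i : M, σn i * (V j - V i)) =
      (1 / 2) * ∑ j : M, ∑ i : M, σn j * σn i * (V j - V i) * (L j - L i) := by
    rw [hC, hA, hB]; ring
  have hD : ∑ j : M, ∑ i : M, σn j * σn i * (V j - V i) * (L j - L i) =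
      w * ∑ j : M, ∑ i : M, σn j * σn i * (V j - V i) ^ 2 := by
    rw [Finset.mul_sum]
    refine Finset.sum_congr rfl fun j _ => ?_
    rw [Finset.mul_sum]
    refine Finset.sum_congr rfl fun i _ => ?_
    rw [hLV j i]; ring
  have h2 : ∑ j : M, L j * (σn j * ∑ i : M, σn i * (V j - V i)) =
      (w / 2) * ∑ j : M, ∑ i : M, σn j * σn i * (V j - V i) ^ 2 := by
    rw [h1, hD]; ring
  refine ⟨h1, h2, ?_⟩
  rw [h2]
  apply mul_nonneg (by positivity)
  apply Finset.sum_nonneg fun j _ => Finset.sum_nonneg fun i _ => ?_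
  have := hσn j; have := hσn i
  positivity
end
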